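/- Let g be a convex geometry on a finite set I with |I| = n. Then the following are equivalent: (1) there exists a chain ∅ = B_0 ⊊ B_1 ⊊ … ⊊ B_n = I of convex sets with |B_j| = j for each j, such that every B_j belongs to every inclusion-maximal order-ideal family of g; (2) g is supersolvable. -/

import Mathlib

/-- A (loopless) convex geometry on a finite ground set `I`: a closure operator
on subsets of `I` satisfying looplessness and the anti-exchange axiom. -/
structure ConvexGeometry (I : Type*) [DecidableEq I] [Fintype I] where
  cl : Finset I → Finset I
  subset_cl : ∀ A, A ⊆ cl A
  mono : ∀ ⦃A B : Finset I⦄, A ⊆ B → cl A ⊆ cl B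
  idem : ∀ A, cl (cl A) = cl A
  loopless : cl ∅ = ∅
  antiExchange : ∀ (A : Finset I) (a b : I), a ≠ b → a ∉ cl A → b ∉ cl A →
    a ∈ cl (insert b A) → b ∉ cl (insert a A)

variable {I : Type*} [DecidableEq I] [Fintype I]

/-- The set of extreme points of `K`: `Ex(K) = {a ∈ K : a ∉ g(K \ {a})}`. -/
def ConvexGeometry.Ex (g : ConvexGeometry I) (K : Finset I) : Finset I :=
  K.filter fun a => a ∉ g.cl (K.erase a)

/-- The sublattice of the lattice of convex sets of `g` generated by a family
`X` of convex sets: the smallest collection containing `X` and closed under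
meet `A ∧ B = A ∩ B` and join `A ∨ B = g(A ∪ B)`. -/
inductive GenSublattice (g : ConvexGeometry I) (X : Set (Finset I)) : Finset I → Prop
  | base {A : Finset I} : A ∈ X → GenSublattice g X A
  | inf {A B : Finset I} : GenSublattice g X A → GenSublattice g X B →
      GenSublattice g X (A ∩ B)
  | sup {A B : Finset I} : GenSublattice g X A → GenSublattice g X B →
      GenSublattice g X (g.cl (A ∪ B))

/-- A maximal chain of the lattice of convex sets of `g`:
`∅ = C_0 ⊊ C_1 ⊊ … ⊊ C_n = I` of convex sets with `|C_j| = j`, `n = |I|`. -/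
def IsMaximalChain (g : ConvexGeometry I) (C : ℕ → Finset I) : Prop :=
  C 0 = ∅ ∧ C (Fintype.card I) = Finset.univ ∧
    (∀ j ≤ Fintype.card I, g.cl (C j) = C j ∧ (C j).card = j) ∧
    ∀ j < Fintype.card I, C j ⊂ C (j + 1)

/-- A family of convex sets satisfies the distributive law (as a lattice with
meet `∩` and join `A ∨ B = g(A ∪ B)`). -/
def DistribOn (g : ConvexGeometry I) (X : Finset I → Prop) : Prop :=
  ∀ a b c : Finset I, X a → X b → X c →
    a ∩ g.cl (b ∪ c) = g.cl ((a ∩ b) ∪ (a ∩ c))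

/-- `g` is supersolvable: there is a maximal chain `C` (a chief chain) such
that for every chain `m` of convex sets, the sublattice generated by `C ∪ m`
is distributive. -/
def Supersolvable (g : ConvexGeometry I) : Prop :=
  ∃ C : ℕ → Finset I, IsMaximalChain g C ∧
    ∀ m : Set (Finset I), (∀ a ∈ m, g.cl a = a) → IsChain (· ⊆ ·) m →
      DistribOn g (GenSublattice g ({A | ∃ j ≤ Fintype.card I, A = C j} ∪ m))

/-- An order-ideal family of `g`: a collection of convex sets containing `∅`
and `I`, closed under pairwise unions and intersections, and point-separating. -/
def IsOrderIdealFamily (g : ConvexGeometry I) (D : Set (Finset I)) : Prop :=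
  (∀ a ∈ D, g.cl a = a) ∧ (∅ : Finset I) ∈ D ∧ (Finset.univ : Finset I) ∈ D ∧
    (∀ a ∈ D, ∀ b ∈ D, a ∪ b ∈ D ∧ a ∩ b ∈ D) ∧
    ∀ x y : I, x ≠ y → ∃ a ∈ D, (x ∈ a ∧ y ∉ a) ∨ (y ∈ a ∧ x ∉ a)

/-- An inclusion-maximal order-ideal family of `g`. -/
def IsMaxOrderIdealFamily (g : ConvexGeometry I) (D : Set (Finset I)) : Prop :=
  IsOrderIdealFamily g D ∧ ∀ D', IsOrderIdealFamily g D' → D ⊆ D' → D' = D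


section AuxiliaryLemmas
open Finset
namespace ConvexGeometry
variable (g : ConvexGeometry I)

lemma cl_univ : g.cl (univ : Finset I) = univ :=
  subset_antisymm (subset_univ _) (g.subset_cl _)

lemma exists_ext {K T : Finset I} (hK : g.cl K = K) (hT : g.cl T = T) (hKT : K ⊂ T) :
    ∃ p, p ∈ T ∧ p ∉ K ∧ g.cl (insert p K) = insert p K := by
  classical
  obtain ⟨x, hxT, hxK⟩ := exists_of_ssubset hKT
  have hne : (T \ K).Nonempty := ⟨x, mem_sdiff.2 ⟨hxT, hxK⟩⟩
  obtain ⟨p, hp, hpmin⟩ := (T \ K).exists_min_image (fun p => (g.cl (insert p K)).card) hne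
  rw [mem_sdiff] at hp
  refine ⟨p, hp.1, hp.2, ?_⟩
  apply subset_antisymm _ (g.subset_cl _)
  intro q hq
  by_contra hq'
  simp only [mem_insert, not_or] at hq'
  have hqT : q ∈ T := by
    have hsub : insert p K ⊆ T := insert_subset hp.1 hKT.subset
    exact hT ▸ g.mono hsub hq
  have hsub : g.cl (insert q K) ⊆ g.cl (insert p K) := by
    have h1 : insert q K ⊆ g.cl (insert p K) :=
      insert_subset hq ((subset_insert _ _).trans (g.subset_cl _))
    calc g.cl (insert q K) ⊆ g.cl (g.cl (insert p K)) := g.mono h1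
      _ = g.cl (insert p K) := g.idem _
  have hpnot : p ∉ g.cl (insert q K) := by
    refine g.antiExchange K q p hq'.1 ?_ ?_ hq
    · rw [hK]; exact hq'.2
    · rw [hK]; exact hp.2
  have hlt : g.cl (insert q K) ⊂ g.cl (insert p K) :=
    ⟨hsub, fun h => hpnot (h (g.subset_cl _ (mem_insert_self p K)))⟩
  exact absurd (hpmin q (mem_sdiff.2 ⟨hqT, hq'.2⟩)) (not_le.2 (card_lt_card hlt))


noncomputable def step (T K : Finset I) : Finset I :=
  if h : ∃ p, p ∈ T ∧ p ∉ K ∧ g.cl (insert p K) = insert p K then insert h.choose K else K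

lemma step_spec {T K : Finset I} (hK : g.cl K = K) (hT : g.cl T = T) (hKT : K ⊂ T) :
    K ⊆ g.step T K ∧ g.step T K ⊆ T ∧ g.cl (g.step T K) = g.step T K ∧
      (g.step T K).card = K.card + 1 := by
  have hex : ∃ p, p ∈ T ∧ p ∉ K ∧ g.cl (insert p K) = insert p K := g.exists_ext hK hT hKT
  rw [step, dif_pos hex]
  obtain ⟨h1, h2, h3⟩ := hex.choose_spec
  exact ⟨subset_insert _ _, insert_subset h1 hKT.subset, h3, card_insert_of_notMem h2⟩

noncomputable def chainTo (L : Finset I) : ℕ → Finset I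
  | 0 => ∅
  | j + 1 =>
    if chainTo L j ⊂ L then g.step L (chainTo L j)
    else if chainTo L j ⊂ Finset.univ then g.step Finset.univ (chainTo L j)
    else chainTo L j

lemma chainTo_succ (L : Finset I) (j : ℕ) :
    g.chainTo L (j+1) =
      if g.chainTo L j ⊂ L then g.step L (g.chainTo L j)
      else if g.chainTo L j ⊂ Finset.univ then g.step Finset.univ (g.chainTo L j)
      else g.chainTo L j := by
  rw [chainTo]

lemma chainTo_spec {L : Finset I} (hL : g.cl L = L) :
    ∀ j, j ≤ Fintype.card I → g.cl (g.chainTo L j) = g.chainTo L j ∧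
      (g.chainTo L j).card = j ∧
      (j ≤ L.card → g.chainTo L j ⊆ L) ∧ (L.card ≤ j → L ⊆ g.chainTo L j) := by
  intro j
  induction j with
  | zero =>
    intro _
    refine ⟨g.loopless, card_empty, fun _ => empty_subset _, fun h => ?_⟩
    exact (card_eq_zero.1 (Nat.le_zero.1 h)) ▸ empty_subset _
  | succ j ih =>
    intro hj
    obtain ⟨hcl, hcard, hsubL, hsupL⟩ := ih (Nat.le_of_succ_le hj)
    by_cases hKL : g.chainTo L j ⊂ L
    · have hs := g.step_spec hcl hL hKL
      have hdef : g.chainTo L (j+1) = g.step L (g.chainTo L j) := by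
        rw [chainTo_succ, if_pos hKL]
      rw [hdef]
      refine ⟨hs.2.2.1, by rw [hs.2.2.2, hcard], fun _ => hs.2.1, fun h => ?_⟩
      have hjlt : j < L.card := by
        have := card_lt_card hKL; omega
      have : (g.step L (g.chainTo L j)).card = L.card := by
        rw [hs.2.2.2, hcard]; omega
      rw [eq_of_subset_of_card_le hs.2.1 (le_of_eq this.symm)]
    · have hKU : g.chainTo L j ⊂ Finset.univ := by
        refine ⟨subset_univ _, fun h => ?_⟩
        have : (Finset.univ : Finset I).card ≤ j := hcard ▸ card_le_card h
        rw [card_univ] at this; omega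
      have hs := g.step_spec hcl g.cl_univ hKU
      have hdef : g.chainTo L (j+1) = g.step Finset.univ (g.chainTo L j) := by
        rw [chainTo_succ, if_neg hKL, if_pos hKU]
      have hLj : L.card ≤ j := by
        by_contra h
        push_neg at h
        have h1 : g.chainTo L j ⊆ L := hsubL (by omega)
        exact hKL ⟨h1, fun h2 => by have := card_le_card h2; omega⟩
      rw [hdef]
      exact ⟨hs.2.2.1, by rw [hs.2.2.2, hcard], fun h => absurd h (by omega),
        fun _ => (hsupL hLj).trans hs.1⟩

lemma chainTo_isMaxChain {L : Finset I} (hL : g.cl L = L) :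
    IsMaximalChain g (g.chainTo L) ∧ g.chainTo L L.card = L := by
  have hspec := g.chainTo_spec hL
  have hLn : L.card ≤ Fintype.card I := card_le_univ L
  have hCL : g.chainTo L L.card = L := by
    obtain ⟨_, hcard, hsub, _⟩ := hspec L.card hLn
    exact eq_of_subset_of_card_le (hsub le_rfl) (by omega)
  refine ⟨⟨rfl, ?_, fun j hj => ⟨(hspec j hj).1, (hspec j hj).2.1⟩, ?_⟩, hCL⟩
  · obtain ⟨_, hcard, _, _⟩ := hspec (Fintype.card I) le_rfl
    exact eq_univ_of_card _ hcard
  · intro j hj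
    obtain ⟨hcl, hcard, hsubL, hsupL⟩ := hspec j (le_of_lt hj)
    obtain ⟨_, hcard', _, _⟩ := hspec (j+1) hj
    have hsub : g.chainTo L j ⊆ g.chainTo L (j+1) := by
      by_cases hKL : g.chainTo L j ⊂ L
      · rw [chainTo_succ, if_pos hKL]; exact (g.step_spec hcl hL hKL).1
      · have hKU : g.chainTo L j ⊂ Finset.univ := by
          refine ⟨subset_univ _, fun h => ?_⟩
          have : (Finset.univ : Finset I).card ≤ j := hcard ▸ card_le_card h
          rw [card_univ] at this; omega
        rw [chainTo_succ, if_neg hKL, if_pos hKU]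
        exact (g.step_spec hcl g.cl_univ hKU).1
    exact ⟨hsub, fun h => by have := card_le_card h; omega⟩


lemma maxChain_mono {C : ℕ → Finset I} (hC : IsMaximalChain g C) :
    ∀ j ≤ Fintype.card I, ∀ i ≤ j, C i ⊆ C j := by
  intro j
  induction j with
  | zero => intro _ i hi; rw [Nat.le_zero.1 hi]
  | succ j ih =>
    intro hj i hi
    by_cases h : i = j + 1
    · rw [h]
    · exact (ih (Nat.le_of_succ_le hj) i (by omega)).trans
        (hC.2.2.2 j (Nat.lt_of_succ_le hj)).subset
  
lemma chainFam_isOIF {C : ℕ → Finset I} (hC : IsMaximalChain g C) :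
    IsOrderIdealFamily g {A | ∃ j ≤ Fintype.card I, A = C j} := by
  classical
  have hmono := g.maxChain_mono hC
  refine ⟨?_, ⟨0, Nat.zero_le _, hC.1.symm⟩, ⟨Fintype.card I, le_rfl, hC.2.1.symm⟩, ?_, ?_⟩
  · rintro a ⟨j, hj, rfl⟩; exact (hC.2.2.1 j hj).1
  · rintro a ⟨i, hi, rfl⟩ b ⟨j, hj, rfl⟩
    rcases le_total i j with h | h
    · have hsub : C i ⊆ C j := hmono j hj i h
      exact ⟨⟨j, hj, union_eq_right.2 hsub⟩, ⟨i, hi, inter_eq_left.2 hsub⟩⟩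
    · have hsub : C j ⊆ C i := hmono i hi j h
      exact ⟨⟨i, hi, union_eq_left.2 hsub⟩, ⟨j, hj, inter_eq_right.2 hsub⟩⟩
  · intro x y hxy
    have hx : ∃ j, x ∈ C j := ⟨Fintype.card I, by rw [hC.2.1]; exact mem_univ x⟩
    have hy : ∃ j, y ∈ C j := ⟨Fintype.card I, by rw [hC.2.1]; exact mem_univ y⟩
    set jx := Nat.find hx with hjx
    set jy := Nat.find hy with hjy
    have hjxn : jx ≤ Fintype.card I := Nat.find_le (by rw [hC.2.1]; exact mem_univ x)
    have hjyn : jy ≤ Fintype.card I := Nat.find_le (by rw [hC.2.1]; exact mem_univ y)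
    have hjx0 : 0 < jx := by
      rcases Nat.eq_zero_or_pos jx with h | h
      · exfalso; have := Nat.find_spec hx; rw [← hjx, h, hC.1] at this; simp at this
      · exact h
    have hjy0 : 0 < jy := by
      rcases Nat.eq_zero_or_pos jy with h | h
      · exfalso; have := Nat.find_spec hy; rw [← hjy, h, hC.1] at this; simp at this
      · exact h
    rcases lt_trichotomy jx jy with h | h | h
    · refine ⟨C jx, ⟨jx, hjxn, rfl⟩, Or.inl ⟨Nat.find_spec hx, fun hyC => ?_⟩⟩
      have : jy ≤ jx := Nat.find_le hyC
      omega
    · exfalso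
      have h1 : C (jx - 1) ⊆ C jx := hmono jx hjxn (jx - 1) (Nat.sub_le _ _)
      have hcards : (C jx).card = jx ∧ (C (jx - 1)).card = jx - 1 :=
        ⟨(hC.2.2.1 jx hjxn).2, (hC.2.2.1 (jx - 1) (by omega)).2⟩
      have hxnot : x ∉ C (jx - 1) := Nat.find_min hx (by omega)
      have hynot : y ∉ C (jx - 1) := by
        rw [h]; exact Nat.find_min hy (by omega)
      have hpair : ({x, y} : Finset I) ⊆ C jx \ C (jx - 1) := by
        intro z hz
        rcases mem_insert.1 hz with rfl | hz
        · exact mem_sdiff.2 ⟨Nat.find_spec hx, hxnot⟩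
        · rw [mem_singleton.1 hz]
          exact mem_sdiff.2 ⟨h ▸ Nat.find_spec hy, hynot⟩
      have hcard2 : ({x, y} : Finset I).card = 2 := card_pair hxy
      have := card_le_card hpair
      rw [hcard2, card_sdiff_of_subset h1, hcards.1, hcards.2] at this
      omega
    · refine ⟨C jy, ⟨jy, hjyn, rfl⟩, Or.inr ⟨Nat.find_spec hy, fun hxC => ?_⟩⟩
      have : jx ≤ jy := Nat.find_le hxC
      omega

lemma exists_max_OIF {D₀ : Set (Finset I)} (h : IsOrderIdealFamily g D₀) :
    ∃ D, IsMaxOrderIdealFamily g D ∧ D₀ ⊆ D := by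
  classical
  have hfin : ({D | IsOrderIdealFamily g D ∧ D₀ ⊆ D} : Set (Set (Finset I))).Finite :=
    Set.toFinite _
  obtain ⟨D, hD, hmax⟩ := Set.Finite.exists_maximalFor id _ hfin ⟨D₀, h, subset_rfl⟩
  refine ⟨D, ⟨hD.1, fun D' hOIF hsub => ?_⟩, hD.2⟩
  exact subset_antisymm (hmax ⟨hOIF, hD.2.trans hsub⟩ hsub) hsub

lemma mod_of_mem_all {K : Finset I}
    (hall : ∀ D, IsMaxOrderIdealFamily g D → K ∈ D) :
    ∀ L, g.cl L = L → g.cl (K ∪ L) = K ∪ L := by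
  intro L hL
  obtain ⟨hmc, hcL⟩ := g.chainTo_isMaxChain hL
  obtain ⟨D, hD, hsub⟩ := g.exists_max_OIF (g.chainFam_isOIF hmc)
  have hLD : L ∈ D := hsub ⟨L.card, card_le_univ L, hcL.symm⟩
  exact hD.1.1 _ (hD.1.2.2.2.1 K (hall D hD) L hLD).1

lemma mem_max_of_mod {K : Finset I}
    (hmod : ∀ L, g.cl L = L → g.cl (K ∪ L) = K ∪ L)
    {D : Set (Finset I)} (hD : IsMaxOrderIdealFamily g D) : K ∈ D := by
  classical
  obtain ⟨⟨hcvx, hemp, huniv, hclose, hsep⟩, hmax⟩ := hD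
  set D' : Set (Finset I) := {S | ∃ a ∈ D, ∃ b ∈ D, S = (a ∩ K) ∪ b} with hD'
  have hDsub : D ⊆ D' := fun a ha => ⟨a, ha, a, ha, by ext x; simp; tauto⟩
  have hOIF' : IsOrderIdealFamily g D' := by
    refine ⟨?_, hDsub hemp, hDsub huniv, ?_, ?_⟩
    · rintro S ⟨a, ha, b, hb, rfl⟩
      have hab : a ∪ b ∈ D := (hclose a ha b hb).1
      have h1 : (a ∩ K) ∪ b ⊆ a ∪ b := by intro x; simp; tauto
      have h2 : (a ∩ K) ∪ b ⊆ K ∪ b := by intro x; simp; tauto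
      have hKb : g.cl (K ∪ b) = K ∪ b := hmod b (hcvx b hb)
      apply subset_antisymm _ (g.subset_cl _)
      intro x hx
      have hx1 : x ∈ a ∪ b := (hcvx _ hab) ▸ g.mono h1 hx
      have hx2 : x ∈ K ∪ b := hKb ▸ g.mono h2 hx
      simp only [mem_union, mem_inter] at hx1 hx2 ⊢
      tauto
    · rintro S ⟨a, ha, b, hb, rfl⟩ S' ⟨c, hc, d, hd, rfl⟩
      constructor
      · exact ⟨a ∪ c, (hclose a ha c hc).1, b ∪ d, (hclose b hb d hd).1,
          by ext x; simp; tauto⟩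
      · refine ⟨(a ∩ c) ∪ ((a ∩ d) ∪ (b ∩ c)), ?_, b ∩ d, (hclose b hb d hd).2, ?_⟩
        · exact (hclose _ (hclose a ha c hc).2 _
            (hclose _ (hclose a ha d hd).2 _ (hclose b hb c hc).2).1).1
        · ext x; simp; tauto
    · intro x y hxy
      obtain ⟨a, ha, hsep'⟩ := hsep x y hxy
      exact ⟨a, hDsub ha, hsep'⟩
  have hEq : D' = D := hmax D' hOIF' hDsub
  rw [← hEq]
  exact ⟨univ, huniv, ∅, hemp, by simp⟩


lemma distrib_of_mod {C : ℕ → Finset I} (hC : IsMaximalChain g C)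
    (hmod : ∀ j ≤ Fintype.card I, ∀ L, g.cl L = L → g.cl (C j ∪ L) = C j ∪ L)
    {m : Set (Finset I)} (hm : ∀ a ∈ m, g.cl a = a) (hch : IsChain (· ⊆ ·) m) :
    DistribOn g (GenSublattice g ({A | ∃ j ≤ Fintype.card I, A = C j} ∪ m)) := by
  classical
  set n := Fintype.card I with hn
  have hmono := g.maxChain_mono hC
  set m' : Set (Finset I) := m ∪ {∅, Finset.univ} with hm'def
  have hm'cl : ∀ M ∈ m', g.cl M = M := by
    rintro M (hM | hM | hM)
    · exact hm M hM
    · rw [hM]; exact g.loopless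
    · rw [hM]; exact g.cl_univ
  have hcomp : ∀ M ∈ m', ∀ N ∈ m', M ⊆ N ∨ N ⊆ M := by
    rintro M hM N hN
    by_cases hMN : M = N
    · exact Or.inl (le_of_eq hMN)
    rcases hM with hM | hM | hM
    · rcases hN with hN | hN | hN
      · exact hch hM hN hMN
      · rw [hN]; exact Or.inr (empty_subset _)
      · rw [hN]; exact Or.inl (subset_univ _)
    · rw [hM]; exact Or.inl (empty_subset _)
    · rw [hM]; exact Or.inr (subset_univ _)
  have hcap : ∀ M ∈ m', ∀ N ∈ m', M ∩ N ∈ m' := by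
    intro M hM N hN
    rcases hcomp M hM N hN with h | h
    · rwa [inter_eq_left.2 h]
    · rwa [inter_eq_right.2 h]
  have hcup : ∀ M ∈ m', ∀ N ∈ m', M ∪ N ∈ m' := by
    intro M hM N hN
    rcases hcomp M hM N hN with h | h
    · rwa [union_eq_right.2 h]
    · rwa [union_eq_left.2 h]
  have hemp : (∅ : Finset I) ∈ m' := Or.inr (Or.inl rfl)
  have huniv : (Finset.univ : Finset I) ∈ m' := Or.inr (Or.inr rfl)
  set Good : Set (Finset I) :=
    {S | ∃ N : ℕ → Finset I, (∀ j, N j ∈ m') ∧ (∀ i j, i ≤ j → N j ⊆ N i) ∧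
      S = (Finset.range (n+1)).biUnion fun j => C j ∩ N j} with hGood
  -- the chain members are Good
  have hCk : ∀ k ≤ n, C k ∈ Good := by
    intro k hk
    refine ⟨fun j => if j ≤ k then Finset.univ else ∅, fun j => by dsimp; split <;>
      [exact huniv; exact hemp], fun i j hij => ?_, ?_⟩
    · dsimp
      by_cases hj : j ≤ k
      · rw [if_pos hj, if_pos (hij.trans hj)]
      · rw [if_neg hj]; exact empty_subset _
    · apply subset_antisymm
      · intro x hx
        refine mem_biUnion.2 ⟨k, mem_range.2 (by omega), ?_⟩
        simp [hx]
      · refine biUnion_subset.2 fun j hj => ?_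
        dsimp only
        by_cases hjk : j ≤ k
        · rw [if_pos hjk, inter_univ]
          exact hmono k hk j hjk
        · rw [if_neg hjk, inter_empty]
          exact empty_subset _
  -- the members of m are Good
  have hMm : ∀ M ∈ m, M ∈ Good := by
    intro M hM
    refine ⟨fun _ => M, fun _ => Or.inl hM, fun _ _ _ => subset_rfl, ?_⟩
    apply subset_antisymm
    · intro x hx
      exact mem_biUnion.2 ⟨n, mem_range.2 (by omega), by simp [hx, hn, hC.2.1]⟩
    · exact biUnion_subset.2 fun j _ => inter_subset_right
  -- Good is closed under ∩ and ∪
  have hGinter : ∀ S ∈ Good, ∀ S' ∈ Good, S ∩ S' ∈ Good := by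
    rintro S ⟨N, hN1, hN2, rfl⟩ S' ⟨N', hN1', hN2', rfl⟩
    refine ⟨fun j => N j ∩ N' j, fun j => hcap _ (hN1 j) _ (hN1' j),
      fun i j hij => inter_subset_inter (hN2 i j hij) (hN2' i j hij), ?_⟩
    apply subset_antisymm
    · intro x hx
      rw [mem_inter] at hx
      obtain ⟨i, hi, hxi⟩ := mem_biUnion.1 hx.1
      obtain ⟨j, hj, hxj⟩ := mem_biUnion.1 hx.2
      rw [mem_inter] at hxi hxj
      rcases le_total i j with h | h
      · exact mem_biUnion.2 ⟨i, hi, mem_inter.2 ⟨hxi.1,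
          mem_inter.2 ⟨hxi.2, hN2' i j h hxj.2⟩⟩⟩
      · exact mem_biUnion.2 ⟨j, hj, mem_inter.2 ⟨hxj.1,
          mem_inter.2 ⟨hN2 j i h hxi.2, hxj.2⟩⟩⟩
    · intro x hx
      obtain ⟨j, hj, hxj⟩ := mem_biUnion.1 hx
      rw [mem_inter, mem_inter] at hxj
      exact mem_inter.2 ⟨mem_biUnion.2 ⟨j, hj, mem_inter.2 ⟨hxj.1, hxj.2.1⟩⟩,
        mem_biUnion.2 ⟨j, hj, mem_inter.2 ⟨hxj.1, hxj.2.2⟩⟩⟩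
  have hGunion : ∀ S ∈ Good, ∀ S' ∈ Good, S ∪ S' ∈ Good := by
    rintro S ⟨N, hN1, hN2, rfl⟩ S' ⟨N', hN1', hN2', rfl⟩
    refine ⟨fun j => N j ∪ N' j, fun j => hcup _ (hN1 j) _ (hN1' j),
      fun i j hij => union_subset_union (hN2 i j hij) (hN2' i j hij), ?_⟩
    ext x
    simp only [mem_union, mem_biUnion, mem_inter]
    constructor
    · rintro (⟨j, hj, h1, h2⟩ | ⟨j, hj, h1, h2⟩)
      · exact ⟨j, hj, h1, Or.inl h2⟩
      · exact ⟨j, hj, h1, Or.inr h2⟩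
    · rintro ⟨j, hj, h1, h2 | h2⟩
      · exact Or.inl ⟨j, hj, h1, h2⟩
      · exact Or.inr ⟨j, hj, h1, h2⟩
  -- key convexity lemma
  have key : ∀ N : ℕ → Finset I, (∀ j, N j ∈ m') → (∀ i j, i ≤ j → N j ⊆ N i) →
      ∀ k, k ≤ n → ∀ M ∈ m', M ⊆ N k →
        g.cl (M ∪ (Finset.range (k+1)).biUnion fun j => C j ∩ N j) =
          M ∪ (Finset.range (k+1)).biUnion fun j => C j ∩ N j := by
    intro N hN1 hN2 k
    induction k with
    | zero =>
      intro _ M hM _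
      have h0 : (Finset.range 1).biUnion (fun j => C j ∩ N j) = ∅ := by
        simp [hC.1]
      rw [h0, union_empty]
      exact hm'cl M hM
    | succ k ih =>
      intro hk M hM hMN
      have hk' : k ≤ n := Nat.le_of_succ_le hk
      set Tk := (Finset.range (k+1)).biUnion (fun j => C j ∩ N j) with hTk
      have hTksub : Tk ⊆ C (k+1) := by
        refine biUnion_subset.2 fun j hj => ?_
        exact inter_subset_left.trans (hmono (k+1) hk j (by
          have := mem_range.1 hj; omega))
      have hU : g.cl (N (k+1) ∪ Tk) = N (k+1) ∪ Tk :=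
        ih hk' (N (k+1)) (hN1 _) (hN2 k (k+1) (Nat.le_succ k))
      have hsplit : (Finset.range (k+2)).biUnion (fun j => C j ∩ N j) =
          Tk ∪ (C (k+1) ∩ N (k+1)) := by
        rw [Finset.range_add_one, biUnion_insert, union_comm]
      have hCU : C (k+1) ∩ (N (k+1) ∪ Tk) = Tk ∪ (C (k+1) ∩ N (k+1)) := by
        ext x
        simp only [mem_inter, mem_union]
        constructor
        · rintro ⟨h1, h2 | h2⟩
          · exact Or.inr ⟨h1, h2⟩
          · exact Or.inl h2
        · rintro (h | ⟨h1, h2⟩)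
          · exact ⟨hTksub h, Or.inr h⟩
          · exact ⟨h1, Or.inl h2⟩
      rw [hsplit, ← hCU]
      set U := N (k+1) ∪ Tk with hUdef
      have hMU : M ⊆ U := hMN.trans subset_union_left
      have hcl1 : g.cl (C (k+1) ∪ M) = C (k+1) ∪ M :=
        hmod (k+1) hk M (hm'cl M hM)
      have hsub1 : M ∪ C (k+1) ∩ U ⊆ C (k+1) ∪ M := by
        intro x hx
        rw [mem_union] at hx ⊢
        rcases hx with h | h
        · exact Or.inr h
        · exact Or.inl (mem_inter.1 h).1
      have hsub2 : M ∪ C (k+1) ∩ U ⊆ U := union_subset hMU inter_subset_right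
      apply subset_antisymm _ (g.subset_cl _)
      intro x hx
      have hx1 : x ∈ C (k+1) ∪ M := hcl1 ▸ g.mono hsub1 hx
      have hx2 : x ∈ U := hU ▸ g.mono hsub2 hx
      rw [mem_union] at hx1 ⊢
      rcases hx1 with h | h
      · exact Or.inr (mem_inter.2 ⟨h, hx2⟩)
      · exact Or.inl h
  have hGcl : ∀ S ∈ Good, g.cl S = S := by
    rintro S ⟨N, hN1, hN2, rfl⟩
    have := key N hN1 hN2 n le_rfl ∅ hemp (empty_subset _)
    rwa [empty_union] at this
  have hGen : ∀ S, GenSublattice g ({A | ∃ j ≤ n, A = C j} ∪ m) S → S ∈ Good := by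
    intro S hS
    induction hS with
    | base hA =>
      rcases hA with ⟨j, hj, rfl⟩ | hA
      · exact hCk j hj
      · exact hMm _ hA
    | inf hA hB ihA ihB => exact hGinter _ ihA _ ihB
    | sup hA hB ihA ihB =>
      have hu := hGunion _ ihA _ ihB
      rw [hGcl _ hu]
      exact hu
  intro a b c ha hb hc
  have ha' := hGen a ha
  have hb' := hGen b hb
  have hc' := hGen c hc
  rw [hGcl _ (hGunion _ hb' _ hc'), hGcl _ (hGunion _ (hGinter _ ha' _ hb') _ (hGinter _ ha' _ hc'))]
  exact inter_union_distrib_left a b c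

lemma mod_of_ss {C : ℕ → Finset I} (hC : IsMaximalChain g C)
    (hd : ∀ m : Set (Finset I), (∀ a ∈ m, g.cl a = a) → IsChain (· ⊆ ·) m →
      DistribOn g (GenSublattice g ({A | ∃ j ≤ Fintype.card I, A = C j} ∪ m))) :
    ∀ j ≤ Fintype.card I, ∀ L, g.cl L = L → g.cl (C j ∪ L) = C j ∪ L := by
  intro j
  induction j with
  | zero =>
    intro _ L hL
    rw [hC.1, empty_union, hL]
  | succ j ih =>
    intro hj L hL
    have hj' : j ≤ Fintype.card I := Nat.le_of_succ_le hj
    have hK : g.cl (C j ∪ L) = C j ∪ L := ih hj' L hL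
    set K := C j ∪ L with hKdef
    have hss : C j ⊂ C (j+1) := hC.2.2.2 j (Nat.lt_of_succ_le hj)
    obtain ⟨x, hx1, hx2⟩ := exists_of_ssubset hss
    have hins : C (j+1) = insert x (C j) := by
      refine (eq_of_subset_of_card_le (insert_subset hx1 hss.subset) ?_).symm
      rw [card_insert_of_notMem hx2, (hC.2.2.1 (j+1) hj).2, (hC.2.2.1 j hj').2]
    have hgoal_set : C (j+1) ∪ L = insert x K := by
      rw [hins, hKdef, insert_union]
    rw [hgoal_set]
    by_cases hxK : x ∈ K
    · rw [insert_eq_self.2 hxK]; exact hK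
    · by_contra hne
      obtain ⟨y, hy, hynot⟩ : ∃ y ∈ g.cl (insert x K), y ∉ insert x K := by
        by_contra h
        push_neg at h
        exact hne (subset_antisymm h (g.subset_cl _))
      rw [mem_insert, not_or] at hynot
      obtain ⟨hyx, hyK⟩ := hynot
      have hxcl : x ∉ g.cl K := by rw [hK]; exact hxK
      have hycl : y ∉ g.cl K := by rw [hK]; exact hyK
      have hxW : x ∉ g.cl (insert y K) := g.antiExchange K y x hyx hycl hxcl hy
      set W := g.cl (insert y K) with hWdef
      have hclW : g.cl W = W := g.idem _
      have hKW : K ⊆ W := (subset_insert y K).trans (g.subset_cl _)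
      have hLW : L ⊆ W := subset_union_right.trans hKW
      have hjW : C j ⊆ W := subset_union_left.trans hKW
      have hyW : y ∈ W := g.subset_cl _ (mem_insert_self y _)
      have hmcl : ∀ a ∈ ({L, W} : Set (Finset I)), g.cl a = a := by
        rintro a (rfl | rfl)
        exacts [hL, hclW]
      have hchain : IsChain (· ⊆ ·) ({L, W} : Set (Finset I)) := by
        rintro A (rfl | rfl) B (rfl | rfl) hAB
        · exact absurd rfl hAB
        · exact Or.inl hLW
        · exact Or.inr hLW
        · exact absurd rfl hAB
      have hdist := hd {L, W} hmcl hchain W (C (j+1)) L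
        (GenSublattice.base (Or.inr (Or.inr rfl)))
        (GenSublattice.base (Or.inl ⟨j+1, hj, rfl⟩))
        (GenSublattice.base (Or.inr (Or.inl rfl)))
      have e1 : W ∩ C (j+1) = C j := by
        rw [hins]
        ext z
        simp only [mem_inter, mem_insert]
        constructor
        · rintro ⟨hzW, rfl | hz⟩
          · exact absurd hzW hxW
          · exact hz
        · intro hz
          exact ⟨hjW hz, Or.inr hz⟩
      have e2 : W ∩ L = L := inter_eq_right.2 hLW
      rw [hgoal_set, e1, e2, hK] at hdist
      have : y ∈ W ∩ g.cl (insert x K) := mem_inter.2 ⟨hyW, hy⟩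
      rw [hdist] at this
      exact hyK this


end ConvexGeometry
end AuxiliaryLemmas

/-- `g` is supersolvable iff there is a maximal chain of convex
sets all of whose members belong to every inclusion-maximal order-ideal
family of `g`. -/
theorem stmt_16 (g : ConvexGeometry I) :
    (∃ B : ℕ → Finset I, IsMaximalChain g B ∧
        ∀ j ≤ Fintype.card I, ∀ D : Set (Finset I),
          IsMaxOrderIdealFamily g D → B j ∈ D) ↔
      Supersolvable g := by
  constructor
  · rintro ⟨B, hB, hmem⟩
    refine ⟨B, hB, ?_⟩
    intro m hm hch
    exact g.distrib_of_mod hB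
      (fun j hj L hL => g.mod_of_mem_all (fun D hD => hmem j hj D hD) L hL) hm hch
  · rintro ⟨C, hC, hd⟩
    refine ⟨C, hC, ?_⟩
    intro j hj D hD
    exact g.mem_max_of_mod (fun L hL => g.mod_of_ss hC hd j hj L hL) hD
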